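/- Let $X$ be a finite connected pure $n$-dimensional simplicial complex ($n \geq 2$) with vertex set $V$, and let $A \subseteq V$ with $0 < |A| < |V|$. Let $W$ be the set of $(n-1)$-faces and let the embedded graph on $W$ join two $(n-1)$-faces when they lie in a common $n$-face. Set $k = \lfloor (n+1)/2 \rfloor$ and $\delta_{min} = \min_{v} \#\{(n-1)\text{-faces containing } v\}$. Then there exists $B \subseteq W$ with $1 \leq |B|$, $|E(B, W \setminus B)| \leq k(n+1-k) \cdot |F(A, V \setminus A)|$, and $|V \setminus A| \leq \frac{n |W \setminus B|}{\delta_{min}}$. -/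

import Mathlib

open scoped Classical

def skeleton {V : Type*} (faces : Finset (Finset V)) : SimpleGraph V where
  Adj u v := u ≠ v ∧ ∃ f ∈ faces, u ∈ f ∧ v ∈ f
  symm := by
    constructor
    rintro u v ⟨h, f, hf, hu, hv⟩
    exact ⟨h.symm, f, hf, hv, hu⟩
  loopless := by
    constructor
    rintro v ⟨h, -⟩
    exact h rfl

private lemma walk_cross {V : Type*} {G : SimpleGraph V} (A : Finset V) :
    ∀ {u w : V}, G.Walk u w → u ∈ A → w ∉ A →
      ∃ x y, G.Adj x y ∧ x ∈ A ∧ y ∉ A := by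
  intro u w p
  induction p with
  | nil => intro h1 h2; exact absurd h1 h2
  | @cons u v w h q ih =>
    intro h1 h2
    by_cases hv : v ∈ A
    · exact ih hv h2
    · exact ⟨u, v, h, h1, hv⟩

private lemma prod_bound (n s t : ℕ) (h : s + t ≤ n + 1) :
    s * t ≤ (n + 1) / 2 * (n + 1 - (n + 1) / 2) := by
  obtain ⟨q, hq | hq⟩ : ∃ q, n + 1 = 2 * q ∨ n + 1 = 2 * q + 1 := ⟨(n + 1) / 2, by omega⟩
  · have h1 : (n + 1) / 2 = q := by omega
    have h2 : n + 1 - q = q := by omega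
    rw [h1, h2]
    have hst : (s : ℤ) + t ≤ 2 * q := by exact_mod_cast (by omega : s + t ≤ 2 * q)
    have h0 : (0 : ℤ) ≤ (s : ℤ) + t := by positivity
    have key : ((s : ℤ) + t) * ((s : ℤ) + t) ≤ (2 * q) * (2 * q) :=
      mul_le_mul hst hst h0 (by positivity)
    have : (s : ℤ) * t ≤ (q : ℤ) * q := by nlinarith [sq_nonneg ((s : ℤ) - t)]
    exact_mod_cast this
  · have h1 : (n + 1) / 2 = q := by omega
    have h2 : n + 1 - q = q + 1 := by omega
    rw [h1, h2]
    have hst : (s : ℤ) + t ≤ 2 * q + 1 := by exact_mod_cast (by omega : s + t ≤ 2 * q + 1)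
    have h0 : (0 : ℤ) ≤ (s : ℤ) + t := by positivity
    have key : ((s : ℤ) + t) * ((s : ℤ) + t) ≤ (2 * q + 1) * (2 * q + 1) :=
      mul_le_mul hst hst h0 (by positivity)
    have h4 : 4 * ((s : ℤ) * t) ≤ 4 * ((q : ℤ) * (q + 1)) + 1 := by
      nlinarith [sq_nonneg ((s : ℤ) - t)]
    have h4' : 4 * (s * t) ≤ 4 * (q * (q + 1)) + 1 := by exact_mod_cast h4
    omega

theorem stmt11 {V : Type*} [Fintype V] [DecidableEq V]
    (n : ℕ) (hn : 2 ≤ n)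
    (faces : Finset (Finset V))
    (hpure : ∀ f ∈ faces, f.card = n + 1)
    (hcover : ∀ v : V, ∃ f ∈ faces, v ∈ f)
    (hconn : (skeleton faces).Connected)
    (W : Finset (Finset V))
    (hW : W = ((Finset.univ : Finset V).powersetCard n).filter
      (fun e => ∃ f ∈ faces, e ⊆ f))
    (k : ℕ) (hk : k = (n + 1) / 2)
    (δmin : ℕ)
    (hδ : IsLeast {m : ℕ | ∃ v : V, m = (W.filter (fun e => v ∈ e)).card} δmin)
    (A : Finset V) (hA1 : 0 < A.card) (hA2 : A.card < Fintype.card V) :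
    ∃ B ⊆ W, 1 ≤ B.card ∧
      ((B ×ˢ (W \ B)).filter
          (fun p => p.1 ≠ p.2 ∧ ∃ f ∈ faces, p.1 ⊆ f ∧ p.2 ⊆ f)).card ≤
        k * (n + 1 - k) *
          (faces.filter (fun f => (∃ v ∈ f, v ∈ A) ∧ (∃ v ∈ f, v ∉ A))).card ∧
      ((Aᶜ.card : ℝ)) ≤ (n : ℝ) * ((W \ B).card : ℝ) / (δmin : ℝ) := by
  -- membership in W
  have hmemW : ∀ e : Finset V, e ∈ W ↔ (e.card = n ∧ ∃ f ∈ faces, e ⊆ f) := by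
    intro e
    rw [hW]
    simp [Finset.mem_filter, Finset.mem_powersetCard_univ]
  have hWne : ∀ e ∈ W, e.Nonempty := by
    intro e he
    have := (hmemW e).mp he
    exact Finset.card_pos.mp (by omega)
  -- a crossing edge exists
  have hAne : A.Nonempty := Finset.card_pos.mp hA1
  have hAc : ∃ v, v ∉ A := by
    by_contra hcon
    push_neg at hcon
    have : A = Finset.univ := Finset.eq_univ_iff_forall.mpr hcon
    rw [this, Finset.card_univ] at hA2
    exact lt_irrefl _ hA2
  obtain ⟨u, hu⟩ := hAne
  obtain ⟨w0, hw0⟩ := hAc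
  obtain ⟨p⟩ := hconn.preconnected u w0
  obtain ⟨x, y, hadj, hx, hy⟩ := walk_cross A p hu hw0
  obtain ⟨hxy, f0, hf0, hxf, hyf⟩ := hadj
  have hf0card : f0.card = n + 1 := hpure f0 hf0
  -- pick a third vertex z and set e₀ := f0.erase z
  have hz : ((f0.erase x).erase y).Nonempty := by
    apply Finset.card_pos.mp
    have h1 := Finset.card_erase_le (a := y) (s := f0.erase x)
    have h2 : (f0.erase x).card = n := by rw [Finset.card_erase_of_mem hxf, hf0card]; omega
    have := Finset.pred_card_le_card_erase (a := y) (s := f0.erase x)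
    omega
  obtain ⟨z, hz⟩ := hz
  obtain ⟨hzy, hzx, hzf⟩ : z ≠ y ∧ z ≠ x ∧ z ∈ f0 := by
    simp [Finset.mem_erase] at hz; tauto
  set e₀ : Finset V := f0.erase z with he₀def
  have he₀sub : e₀ ⊆ f0 := Finset.erase_subset _ _
  have he₀card : e₀.card = n := by rw [he₀def, Finset.card_erase_of_mem hzf, hf0card]; omega
  have hxe₀ : x ∈ e₀ := Finset.mem_erase.mpr ⟨fun h => hzx h.symm, hxf⟩
  have hye₀ : y ∈ e₀ := Finset.mem_erase.mpr ⟨fun h => hzy h.symm, hyf⟩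
  have he₀W : e₀ ∈ W := (hmemW e₀).mpr ⟨he₀card, f0, hf0, he₀sub⟩
  have he₀notA : ¬ e₀ ⊆ A := fun h => hy (h hye₀)
  -- the set B
  set B : Finset (Finset V) := W.filter (fun e => e ⊆ A) ∪ {e₀} with hBdef
  have hBmem : ∀ e : Finset V, e ∈ B ↔ ((e ∈ W ∧ e ⊆ A) ∨ e = e₀) := by
    intro e
    simp [hBdef, Finset.mem_union, Finset.mem_filter]
    tauto
  have hBsub : B ⊆ W := by
    intro e he
    rcases (hBmem e).mp he with ⟨h1, _⟩ | h
    · exact h1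
    · rw [h]; exact he₀W
  refine ⟨B, hBsub, ?_, ?_, ?_⟩
  · exact Finset.card_pos.mpr ⟨e₀, (hBmem e₀).mpr (Or.inr rfl)⟩
  · -- edge bound
    set Fm := faces.filter (fun f => (∃ v ∈ f, v ∈ A) ∧ (∃ v ∈ f, v ∉ A)) with hFm
    set g : Finset V → Finset (Finset V × Finset V) := fun f =>
      (W.filter (fun e => e ⊆ f ∧ e ∈ B)) ×ˢ (W.filter (fun e => e ⊆ f ∧ e ∉ B)) with hg
    have hsub : ((B ×ˢ (W \ B)).filter
        (fun p => p.1 ≠ p.2 ∧ ∃ f ∈ faces, p.1 ⊆ f ∧ p.2 ⊆ f)) ⊆ Fm.biUnion g := by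
      intro p hp
      rw [Finset.mem_filter, Finset.mem_product] at hp
      obtain ⟨⟨hp1, hp2⟩, _, f, hf, hs1, hs2⟩ := hp
      rw [Finset.mem_sdiff] at hp2
      have hp2B := hp2.2
      have hp1W : p.1 ∈ W := hBsub hp1
      have hfm1 : ∃ v ∈ f, v ∈ A := by
        rcases (hBmem p.1).mp hp1 with ⟨h1, h2⟩ | h
        · obtain ⟨v, hv⟩ := hWne _ hp1W
          exact ⟨v, hs1 hv, h2 hv⟩
        · exact ⟨x, hs1 (h ▸ hxe₀), hx⟩
      have hfm2 : ∃ v ∈ f, v ∉ A := by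
        by_contra hcon
        push_neg at hcon
        exact hp2B ((hBmem p.2).mpr (Or.inl ⟨hp2.1, fun a ha => hcon a (hs2 ha)⟩))
      rw [Finset.mem_biUnion]
      refine ⟨f, ?_, ?_⟩
      · rw [hFm, Finset.mem_filter]
        exact ⟨hf, hfm1, hfm2⟩
      · rw [hg]
        rw [Finset.mem_product]
        constructor
        · rw [Finset.mem_filter]
          exact ⟨hp1W, hs1, hp1⟩
        · rw [Finset.mem_filter]
          exact ⟨hp2.1, hs2, hp2B⟩
    calc ((B ×ˢ (W \ B)).filter
          (fun p => p.1 ≠ p.2 ∧ ∃ f ∈ faces, p.1 ⊆ f ∧ p.2 ⊆ f)).card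
        ≤ (Fm.biUnion g).card := Finset.card_le_card hsub
      _ ≤ ∑ f ∈ Fm, (g f).card := Finset.card_biUnion_le
      _ ≤ ∑ f ∈ Fm, k * (n + 1 - k) := by
          apply Finset.sum_le_sum
          intro f hfm
          rw [hFm, Finset.mem_filter] at hfm
          have hfc : f.card = n + 1 := hpure f hfm.1
          rw [hg]
          simp only []
          rw [Finset.card_product]
          set s1 := W.filter (fun e => e ⊆ f ∧ e ∈ B) with hs1def
          set s2 := W.filter (fun e => e ⊆ f ∧ e ∉ B) with hs2def
          have hdisj : Disjoint s1 s2 := by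
            rw [Finset.disjoint_left]
            intro a ha hb
            rw [hs1def, Finset.mem_filter] at ha
            rw [hs2def, Finset.mem_filter] at hb
            exact hb.2.2 ha.2.2
          have hsub2 : s1 ∪ s2 ⊆ f.powersetCard n := by
            intro e he
            rcases Finset.mem_union.mp he with h | h <;>
              · rw [Finset.mem_filter] at h
                exact Finset.mem_powersetCard.mpr ⟨h.2.1, ((hmemW e).mp h.1).1⟩
          have hcard : s1.card + s2.card ≤ n + 1 := by
            rw [← Finset.card_union_of_disjoint hdisj]
            calc (s1 ∪ s2).card ≤ (f.powersetCard n).card := Finset.card_le_card hsub2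
              _ = (n+1).choose n := by rw [Finset.card_powersetCard, hfc]
              _ = n + 1 := Nat.choose_succ_self_right n
          rw [hk]
          exact prod_bound n _ _ hcard
      _ = Fm.card * (k * (n + 1 - k)) := by rw [Finset.sum_const, smul_eq_mul]
      _ = k * (n + 1 - k) * Fm.card := mul_comm _ _
  · -- vertex bound
    have hδpos : 0 < δmin := by
      obtain ⟨v₀, hv₀⟩ := hδ.1
      obtain ⟨f, hf, hvf⟩ := hcover v₀
      have hfc : f.card = n + 1 := hpure f hf
      obtain ⟨z', hz'f, hz'⟩ : ∃ b ∈ f, b ≠ v₀ :=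
        Finset.exists_mem_ne (by omega) v₀
      have heW : f.erase z' ∈ W := (hmemW _).mpr
        ⟨by rw [Finset.card_erase_of_mem hz'f, hfc]; omega, f, hf, Finset.erase_subset _ _⟩
      rw [hv₀]
      exact Finset.card_pos.mpr ⟨f.erase z', Finset.mem_filter.mpr
        ⟨heW, Finset.mem_erase.mpr ⟨fun h => hz' h.symm, hvf⟩⟩⟩
    set C := W.filter (fun e => ∀ v ∈ e, v ∉ A) with hC
    set M := W.filter (fun e => (∃ v ∈ e, v ∈ A) ∧ (∃ v ∈ e, v ∉ A)) with hM
    have he₀M : e₀ ∈ M := by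
      rw [hM, Finset.mem_filter]
      exact ⟨he₀W, ⟨x, hxe₀, hx⟩, ⟨y, hye₀, hy⟩⟩
    -- M has at least n elements
    have hMcard : n ≤ M.card := by
      set P : V → Prop := fun z => (∃ v ∈ f0.erase z, v ∈ A) ∧ (∃ v ∈ f0.erase z, v ∉ A) with hP
      have himg : (f0.filter P).image (f0.erase ·) ⊆ M := by
        intro e he
        rw [Finset.mem_image] at he
        obtain ⟨a, ha, hae⟩ := he
        rw [Finset.mem_filter] at ha
        subst hae
        rw [hM, Finset.mem_filter]
        refine ⟨(hmemW _).mpr ⟨?_, f0, hf0, Finset.erase_subset _ _⟩, ha.2⟩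
        rw [Finset.card_erase_of_mem ha.1, hf0card]; omega
      have hinj : Set.InjOn (f0.erase ·) (f0.filter P) := by
        intro a ha b hb hab
        simp only [Finset.coe_filter, Set.mem_setOf_eq] at ha hb
        by_contra hne
        have hab' : f0.erase a = f0.erase b := hab
        have : a ∈ f0.erase b := Finset.mem_erase.mpr ⟨hne, ha.1⟩
        rw [← hab'] at this
        exact (Finset.notMem_erase a f0) this
      have hcardimg : ((f0.filter P).image (f0.erase ·)).card = (f0.filter P).card :=
        Finset.card_image_of_injOn hinj
      have hbad : (f0.filter (fun z => ¬ P z)).card ≤ 1 := by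
        rw [Finset.card_le_one]
        intro a ha b hb
        rw [Finset.mem_filter] at ha hb
        by_contra hab
        have hw : ((f0.erase a).erase b).Nonempty := by
          apply Finset.card_pos.mp
          have h1 := Finset.pred_card_le_card_erase (a := b) (s := f0.erase a)
          have h2 : (f0.erase a).card = n := by
            rw [Finset.card_erase_of_mem ha.1, hf0card]; omega
          omega
        obtain ⟨w, hw⟩ := hw
        obtain ⟨hwb, hwa, hwf⟩ : w ≠ b ∧ w ≠ a ∧ w ∈ f0 := by
          simp [Finset.mem_erase] at hw; tauto
        have hxcase : ∀ c ∈ f0, (∀ v ∈ f0.erase c, v ∉ A) → c = x := by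
          intro c _ hall
          by_contra hcx
          exact hall x (Finset.mem_erase.mpr ⟨fun h => hcx h.symm, hxf⟩) hx
        have hycase : ∀ c ∈ f0, (∀ v ∈ f0.erase c, v ∈ A) → c = y := by
          intro c _ hall
          by_contra hcy
          exact hy (hall y (Finset.mem_erase.mpr ⟨fun h => hcy h.symm, hyf⟩))
        rcases not_and_or.mp ha.2 with h1 | h1 <;> rcases not_and_or.mp hb.2 with h2 | h2 <;>
          push_neg at h1 h2
        · exact hab ((hxcase a ha.1 h1).trans (hxcase b hb.1 h2).symm)
        · exact (h1 w (Finset.mem_erase.mpr ⟨hwa, hwf⟩))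
            (h2 w (Finset.mem_erase.mpr ⟨hwb, hwf⟩))
        · exact (h2 w (Finset.mem_erase.mpr ⟨hwb, hwf⟩))
            (h1 w (Finset.mem_erase.mpr ⟨hwa, hwf⟩))
        · exact hab ((hycase a ha.1 h1).trans (hycase b hb.1 h2).symm)
      have hgood : n ≤ (f0.filter P).card := by
        have := Finset.card_filter_add_card_filter_not (s := f0) (p := P)
        omega
      calc n ≤ (f0.filter P).card := hgood
        _ = ((f0.filter P).image (f0.erase ·)).card := hcardimg.symm
        _ ≤ M.card := Finset.card_le_card himg
    -- degree sum
    have hdeg : ∀ v : V, δmin ≤ (W.filter (fun e => v ∈ e)).card := fun v => hδ.2 ⟨v, rfl⟩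
    have h1 : δmin * Aᶜ.card ≤ ∑ v ∈ Aᶜ, (W.filter (fun e => v ∈ e)).card := by
      calc δmin * Aᶜ.card = ∑ _v ∈ Aᶜ, δmin := by rw [Finset.sum_const, smul_eq_mul, mul_comm]
        _ ≤ _ := Finset.sum_le_sum (fun v _ => hdeg v)
    have h2 : ∑ v ∈ Aᶜ, (W.filter (fun e => v ∈ e)).card = ∑ e ∈ W, (e ∩ Aᶜ).card := by
      have hrw : ∀ e : Finset V, (e ∩ Aᶜ).card = (Aᶜ.filter (fun v => v ∈ e)).card := by
        intro e
        congr 1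
        ext v
        simp [Finset.mem_inter, Finset.mem_filter, and_comm]
      simp_rw [hrw, Finset.card_filter]
      exact Finset.sum_comm
    have hCMsub : C ∪ M ⊆ W := Finset.union_subset (Finset.filter_subset _ _) (Finset.filter_subset _ _)
    have hdisjCM : Disjoint C M := by
      rw [Finset.disjoint_left]
      intro e heC heM
      rw [hC, Finset.mem_filter] at heC
      rw [hM, Finset.mem_filter] at heM
      obtain ⟨v, hv, hvA⟩ := heM.2.1
      exact heC.2 v hv hvA
    have hsplitsum : ∑ e ∈ W, (e ∩ Aᶜ).card = ∑ e ∈ C ∪ M, (e ∩ Aᶜ).card := by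
      symm
      apply Finset.sum_subset hCMsub
      intro e heW hem
      rw [Finset.mem_union, hC, hM, Finset.mem_filter, Finset.mem_filter] at hem
      push_neg at hem
      have hP1 : ∃ v ∈ e, v ∈ A := hem.1 heW
      have hall : ∀ v ∈ e, v ∈ A := (hem.2 heW) hP1
      rw [Finset.card_eq_zero, Finset.eq_empty_iff_forall_notMem]
      intro v hv
      rw [Finset.mem_inter, Finset.mem_compl] at hv
      exact hv.2 (hall v hv.1)
    have hCub : ∑ e ∈ C, (e ∩ Aᶜ).card ≤ n * C.card := by
      have hb : ∀ e ∈ C, (e ∩ Aᶜ).card ≤ n := by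
        intro e he
        rw [hC, Finset.mem_filter] at he
        calc (e ∩ Aᶜ).card ≤ e.card := Finset.card_le_card Finset.inter_subset_left
          _ = n := ((hmemW e).mp he.1).1
      have := Finset.sum_le_card_nsmul C _ n hb
      simpa [mul_comm] using this
    have hMub : ∑ e ∈ M, (e ∩ Aᶜ).card ≤ (n - 1) * M.card := by
      have hb : ∀ e ∈ M, (e ∩ Aᶜ).card ≤ n - 1 := by
        intro e he
        rw [hM, Finset.mem_filter] at he
        obtain ⟨x', hx'e, hx'A⟩ := he.2.1
        have hsub : e ∩ Aᶜ ⊆ e.erase x' := by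
          intro v hv
          rw [Finset.mem_inter, Finset.mem_compl] at hv
          exact Finset.mem_erase.mpr ⟨fun h => hv.2 (h ▸ hx'A), hv.1⟩
        calc (e ∩ Aᶜ).card ≤ (e.erase x').card := Finset.card_le_card hsub
          _ = e.card - 1 := Finset.card_erase_of_mem hx'e
          _ = n - 1 := by rw [((hmemW e).mp he.1).1]
      have := Finset.sum_le_card_nsmul M _ (n - 1) hb
      simpa [mul_comm] using this
    -- the partition identity
    have hWB : W \ B = C ∪ M.erase e₀ := by
      ext e
      constructor
      · intro h
        rw [Finset.mem_sdiff] at h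
        obtain ⟨heW, heB⟩ := h
        have hnA : ¬ e ⊆ A := fun h' => heB ((hBmem e).mpr (Or.inl ⟨heW, h'⟩))
        have hne₀ : e ≠ e₀ := fun h' => heB ((hBmem e).mpr (Or.inr h'))
        have hex : ∃ v ∈ e, v ∉ A := by
          by_contra hc
          push_neg at hc
          exact hnA (fun a ha => hc a ha)
        rw [Finset.mem_union]
        by_cases hexA : ∃ v ∈ e, v ∈ A
        · exact Or.inr (Finset.mem_erase.mpr ⟨hne₀, Finset.mem_filter.mpr ⟨heW, hexA, hex⟩⟩)
        · push_neg at hexA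
          exact Or.inl (Finset.mem_filter.mpr ⟨heW, hexA⟩)
      · intro h
        rw [Finset.mem_union] at h
        rw [Finset.mem_sdiff]
        rcases h with h | h
        · rw [hC, Finset.mem_filter] at h
          refine ⟨h.1, fun hB => ?_⟩
          rcases (hBmem e).mp hB with ⟨_, hsubA⟩ | heq
          · obtain ⟨v, hv⟩ := hWne e h.1
            exact h.2 v hv (hsubA hv)
          · exact h.2 x (heq ▸ hxe₀) hx
        · rw [Finset.mem_erase] at h
          obtain ⟨hne₀, hM'⟩ := h
          rw [hM, Finset.mem_filter] at hM'
          refine ⟨hM'.1, fun hB => ?_⟩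
          rcases (hBmem e).mp hB with ⟨_, hsubA⟩ | heq
          · obtain ⟨v, hv, hvA⟩ := hM'.2.2
            exact hvA (hsubA hv)
          · exact hne₀ heq
    have hdisj2 : Disjoint C (M.erase e₀) :=
      hdisjCM.mono_right (Finset.erase_subset _ _)
    have hcardWB : (W \ B).card + 1 = C.card + M.card := by
      rw [hWB, Finset.card_union_of_disjoint hdisj2, Finset.card_erase_of_mem he₀M]
      have : 1 ≤ M.card := Finset.card_pos.mpr ⟨e₀, he₀M⟩
      omega
    -- combine
    have hnat : δmin * Aᶜ.card ≤ n * (W \ B).card := by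
      have e1 : ∑ e ∈ W, (e ∩ Aᶜ).card ≤ n * C.card + (n - 1) * M.card := by
        rw [hsplitsum, Finset.sum_union hdisjCM]
        exact Nat.add_le_add hCub hMub
      have e2 : n * ((W \ B).card + 1) = n * C.card + n * M.card := by
        rw [hcardWB]; ring
      have e3 : (n - 1) * M.card + M.card = n * M.card := by
        have hn1 : n - 1 + 1 = n := by omega
        calc (n - 1) * M.card + M.card = (n - 1 + 1) * M.card := by ring
          _ = n * M.card := by rw [hn1]
      have e4 : n * ((W \ B).card + 1) = n * (W \ B).card + n := by ring
      linarith [h1, h2, e1, e2, e3, e4, hMcard]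
    rw [le_div_iff₀ (by exact_mod_cast hδpos : (0:ℝ) < (δmin : ℝ))]
    calc (Aᶜ.card : ℝ) * δmin = ((δmin * Aᶜ.card : ℕ) : ℝ) := by push_cast; ring
      _ ≤ ((n * (W \ B).card : ℕ) : ℝ) := by exact_mod_cast hnat
      _ = (n : ℝ) * ((W \ B).card : ℝ) := by push_cast; ring
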